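/- In the saddle-point setting, with the block-diagonal preconditioner M_D = [[F, 0],[0, H2]] and H = blockdiag(H1, H2), if η < 1/2 then ‖H(M_D⁻¹K) − (M_D⁻¹K)ᵀH‖_{H,H⁻¹} ≤ 4 C₁ η. -/

import Mathlib

set_option linter.unusedSectionVars false
set_option linter.unusedVariables false

open Matrix

noncomputable def vnorm {α : Type*} [Fintype α] (H : Matrix α α ℝ) (u : α → ℝ) : ℝ :=
  Real.sqrt (u ⬝ᵥ (H *ᵥ u))

noncomputable def wnorm {α β : Type*} [Fintype α] [Fintype β]
    (H1 : Matrix α α ℝ) (H2 : Matrix β β ℝ) (M : Matrix β α ℝ) : ℝ :=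
  sSup {r : ℝ | ∃ v : α → ℝ, v ≠ 0 ∧ r = vnorm H2 (M *ᵥ v) / vnorm H1 v}

section helpers

variable {α β : Type*} [Fintype α] [DecidableEq α] [Fintype β] [DecidableEq β]

lemma dot_self_nonneg (u : α → ℝ) : 0 ≤ u ⬝ᵥ u :=
  Finset.sum_nonneg fun i _ => mul_self_nonneg _

lemma ecs (u v : α → ℝ) : u ⬝ᵥ v ≤ Real.sqrt (u ⬝ᵥ u) * Real.sqrt (v ⬝ᵥ v) := by
  have h1 : (u ⬝ᵥ v) ^ 2 ≤ (u ⬝ᵥ u) * (v ⬝ᵥ v) := by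
    have := Finset.sum_mul_sq_le_sq_mul_sq Finset.univ u v
    simpa [dotProduct, pow_two, Finset.sum_mul_sum] using this
  calc u ⬝ᵥ v ≤ |u ⬝ᵥ v| := le_abs_self _
    _ = Real.sqrt ((u ⬝ᵥ v) ^ 2) := (Real.sqrt_sq_eq_abs _).symm
    _ ≤ Real.sqrt ((u ⬝ᵥ u) * (v ⬝ᵥ v)) := Real.sqrt_le_sqrt h1
    _ = _ := Real.sqrt_mul (dot_self_nonneg u) _

lemma vnorm_nonneg (P : Matrix α α ℝ) (u : α → ℝ) : 0 ≤ vnorm P u := Real.sqrt_nonneg _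

lemma vnorm_sq {P : Matrix α α ℝ} (hp : P.PosSemidef) (u : α → ℝ) :
    vnorm P u ^ 2 = u ⬝ᵥ (P *ᵥ u) :=
  Real.sq_sqrt (by simpa using hp.dotProduct_mulVec_nonneg u)

lemma vnorm_pos {P : Matrix α α ℝ} (hp : P.PosDef) {u : α → ℝ} (hu : u ≠ 0) :
    0 < vnorm P u :=
  Real.sqrt_pos.2 (by simpa using hp.dotProduct_mulVec_pos hu)

lemma vnorm_neg (P : Matrix α α ℝ) (u : α → ℝ) : vnorm P (-u) = vnorm P u := by
  simp [vnorm, mulVec_neg]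

lemma herm_transpose {P : Matrix α α ℝ} (h : P.IsHermitian) : Pᵀ = P := by
  exact IsSymm.eq (by simpa [conjTranspose_eq_transpose_of_trivial] using h)

open scoped MatrixOrder in
lemma posdef_sqrt {P : Matrix α α ℝ} (hp : P.PosDef) :
    ∃ S : Matrix α α ℝ, Sᵀ = S ∧ S * S = P ∧ IsUnit S.det ∧
      S⁻¹ * S⁻¹ = P⁻¹ ∧ (S⁻¹)ᵀ = S⁻¹ := by
  set S := CFC.sqrt P with hSdef
  have hSt : Sᵀ = S := herm_transpose (CFC.sqrt_nonneg P).posSemidef.1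
  have hSS : S * S = P := CFC.sqrt_mul_sqrt_self P hp.posSemidef.nonneg
  have hdet : IsUnit S.det := by
    rw [isUnit_iff_ne_zero]
    intro h0
    have : P.det = 0 := by rw [← hSS, det_mul, h0, mul_zero]
    exact hp.det_pos.ne' this
  refine ⟨S, hSt, hSS, hdet, ?_, ?_⟩
  · rw [← hSS, Matrix.mul_inv_rev]
  · rw [Matrix.transpose_nonsing_inv, hSt]

lemma vnorm_eq_enorm {P S : Matrix α α ℝ} (hSt : Sᵀ = S) (hSS : S * S = P) (w : α → ℝ) :
    vnorm P w = Real.sqrt ((S *ᵥ w) ⬝ᵥ (S *ᵥ w)) := by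
  unfold vnorm
  congr 1
  rw [dotProduct_mulVec (S *ᵥ w) S w, ← mulVec_transpose, mulVec_mulVec, hSt, hSS,
    dotProduct_comm]

/-- weighted Cauchy–Schwarz -/
lemma wcs {P : Matrix α α ℝ} (hp : P.PosDef) (u w : α → ℝ) :
    u ⬝ᵥ w ≤ vnorm P⁻¹ u * vnorm P w := by
  obtain ⟨S, hSt, hSS, hSdet, hSinv, hSinvt⟩ := posdef_sqrt hp
  have hu : u = S *ᵥ (S⁻¹ *ᵥ u) := by
    rw [mulVec_mulVec, mul_nonsing_inv _ hSdet, one_mulVec]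
  have h1 : u ⬝ᵥ w = (S⁻¹ *ᵥ u) ⬝ᵥ (S *ᵥ w) := by
    conv_lhs => rw [hu]
    rw [dotProduct_comm, dotProduct_mulVec, ← mulVec_transpose, hSt, dotProduct_comm]
  rw [h1, vnorm_eq_enorm hSinvt hSinv u, vnorm_eq_enorm hSt hSS w]
  exact ecs _ _

lemma vnorm_inv_mulVec {P : Matrix α α ℝ} (hp : P.PosDef) (u : α → ℝ) :
    vnorm P (P⁻¹ *ᵥ u) = vnorm P⁻¹ u := by
  have hdet : IsUnit P.det := isUnit_iff_ne_zero.2 hp.det_pos.ne'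
  unfold vnorm
  rw [mulVec_mulVec, mul_nonsing_inv _ hdet, one_mulVec, dotProduct_comm]

lemma enorm_mulVec_le (M : Matrix β α ℝ) : ∃ c : ℝ, ∀ w : α → ℝ,
    Real.sqrt ((M *ᵥ w) ⬝ᵥ (M *ᵥ w)) ≤ c * Real.sqrt (w ⬝ᵥ w) := by
  refine ⟨Real.sqrt (∑ i, ∑ j, M i j ^ 2), fun w => ?_⟩
  have hnn : (0:ℝ) ≤ ∑ i, ∑ j, M i j ^ 2 :=
    Finset.sum_nonneg fun i _ => Finset.sum_nonneg fun j _ => sq_nonneg _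
  rw [← Real.sqrt_mul hnn]
  apply Real.sqrt_le_sqrt
  have hrow : ∀ i, (M *ᵥ w) i * (M *ᵥ w) i ≤ (∑ j, M i j ^ 2) * (w ⬝ᵥ w) := by
    intro i
    have := Finset.sum_mul_sq_le_sq_mul_sq Finset.univ (fun j => M i j) w
    calc (M *ᵥ w) i * (M *ᵥ w) i = (∑ j, M i j * w j) ^ 2 := by
          simp [mulVec, dotProduct, pow_two]
      _ ≤ (∑ j, M i j ^ 2) * ∑ j, w j ^ 2 := this
      _ = (∑ j, M i j ^ 2) * (w ⬝ᵥ w) := by simp [dotProduct, pow_two]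
  calc (M *ᵥ w) ⬝ᵥ (M *ᵥ w) = ∑ i, (M *ᵥ w) i * (M *ᵥ w) i := rfl
    _ ≤ ∑ i, (∑ j, M i j ^ 2) * (w ⬝ᵥ w) := Finset.sum_le_sum fun i _ => hrow i
    _ = (∑ i, ∑ j, M i j ^ 2) * (w ⬝ᵥ w) := by rw [Finset.sum_mul]

lemma pointwise_of_wnorm_le {P : Matrix α α ℝ} {R : Matrix β β ℝ}
    (hp : P.PosDef) (hr : R.PosDef) (M : Matrix β α ℝ) {c : ℝ}
    (h : wnorm P R M ≤ c) (v : α → ℝ) : vnorm R (M *ᵥ v) ≤ c * vnorm P v := by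
  rcases eq_or_ne v 0 with rfl | hv
  · simp [vnorm, mulVec_zero, Real.sqrt_zero]
  obtain ⟨SP, hSPt, hSPS, hSPdet, hSPinv, hSPinvt⟩ := posdef_sqrt hp
  obtain ⟨SR, hSRt, hSRS, hSRdet, hSRinv, hSRinvt⟩ := posdef_sqrt hr
  obtain ⟨c₀, hc₀⟩ := enorm_mulVec_le (SR * M * SP⁻¹)
  have hbdd : BddAbove {r : ℝ | ∃ w : α → ℝ, w ≠ 0 ∧ r = vnorm R (M *ᵥ w) / vnorm P w} := by
    refine ⟨c₀, ?_⟩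
    rintro r ⟨w, hw, rfl⟩
    have hwpos : 0 < vnorm P w := vnorm_pos hp hw
    have key : vnorm R (M *ᵥ w) ≤ c₀ * vnorm P w := by
      have hre : SR *ᵥ (M *ᵥ w) = (SR * M * SP⁻¹) *ᵥ (SP *ᵥ w) := by
        rw [mulVec_mulVec, mulVec_mulVec, Matrix.mul_assoc (SR * M) SP⁻¹ SP,
          nonsing_inv_mul _ hSPdet, Matrix.mul_one]
      rw [vnorm_eq_enorm hSRt hSRS, hre, vnorm_eq_enorm hSPt hSPS]
      exact hc₀ _
    rw [div_le_iff₀ hwpos]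
    exact key
  have hmem : vnorm R (M *ᵥ v) / vnorm P v ∈
      {r : ℝ | ∃ w : α → ℝ, w ≠ 0 ∧ r = vnorm R (M *ᵥ w) / vnorm P w} := ⟨v, hv, rfl⟩
  have hle : vnorm R (M *ᵥ v) / vnorm P v ≤ c := le_trans (le_csSup hbdd hmem) h
  have hvpos : 0 < vnorm P v := vnorm_pos hp hv
  calc vnorm R (M *ᵥ v) = vnorm R (M *ᵥ v) / vnorm P v * vnorm P v := by
        field_simp
    _ ≤ c * vnorm P v := mul_le_mul_of_nonneg_right hle hvpos.le

lemma skew_dot {N : Matrix α α ℝ} (hNt : Nᵀ = -N) (z : α → ℝ) : z ⬝ᵥ (N *ᵥ z) = 0 := by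
  have h : z ⬝ᵥ (N *ᵥ z) = -(z ⬝ᵥ (N *ᵥ z)) := by
    calc z ⬝ᵥ (N *ᵥ z) = (z ᵥ* N) ⬝ᵥ z := dotProduct_mulVec z N z
      _ = (Nᵀ *ᵥ z) ⬝ᵥ z := by rw [mulVec_transpose]
      _ = (-(N *ᵥ z)) ⬝ᵥ z := by rw [hNt, neg_mulVec]
      _ = -((N *ᵥ z) ⬝ᵥ z) := by rw [neg_dotProduct]
      _ = -(z ⬝ᵥ (N *ᵥ z)) := by rw [dotProduct_comm]
  linarith

end helpers
section mainhelpers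

lemma fromBlocks_sub'' {l m o p : Type*} (A A' : Matrix l m ℝ) (B B' : Matrix l o ℝ)
    (C C' : Matrix p m ℝ) (D D' : Matrix p o ℝ) :
    fromBlocks A B C D - fromBlocks A' B' C' D' =
      fromBlocks (A - A') (B - B') (C - C') (D - D') := by
  rw [sub_eq_add_neg, Matrix.fromBlocks_neg, Matrix.fromBlocks_add]
  simp [sub_eq_add_neg]

lemma combine {A' B' a b c : ℝ} (hA' : 0 ≤ A') (hB' : 0 ≤ B') (hc : 0 ≤ c)
    (h1 : A' ≤ c * b) (h2 : B' ≤ c * a) :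
    Real.sqrt (A' ^ 2 + B' ^ 2) ≤ c * Real.sqrt (a ^ 2 + b ^ 2) := by
  have key : A' ^ 2 + B' ^ 2 ≤ c ^ 2 * (a ^ 2 + b ^ 2) := by nlinarith
  calc Real.sqrt (A' ^ 2 + B' ^ 2) ≤ Real.sqrt (c ^ 2 * (a ^ 2 + b ^ 2)) :=
        Real.sqrt_le_sqrt key
    _ = c * Real.sqrt (a ^ 2 + b ^ 2) := by
        rw [Real.sqrt_mul (sq_nonneg c), Real.sqrt_sq hc]

end mainhelpers

theorem stmt_13
    {n m : ℕ} (F : Matrix (Fin n) (Fin n) ℝ) (B : Matrix (Fin m) (Fin n) ℝ)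
    (H1 N : Matrix (Fin n) (Fin n) ℝ) (H2 : Matrix (Fin m) (Fin m) ℝ)
    (η C₁ C₂ : ℝ) (hη : 0 < η) (hC1 : 0 < C₁) (hC2 : 0 < C₂)
    (hH1 : H1 = ((1 : ℝ)/2) • (F + Fᵀ)) (hN : N = ((1 : ℝ)/2) • (F - Fᵀ))
    (hH1pd : H1.PosDef) (hH2pd : H2.PosDef)
    (hBrank : B.rank = m)
    (hNnorm : wnorm H1 H1⁻¹ N ≤ η)
    (hBnorm : wnorm H1 H2⁻¹ B ≤ C₁)
    (hinfsup : ∀ x : Fin m → ℝ, x ≠ 0 → C₂ * vnorm H2 x ≤ vnorm H1⁻¹ (Bᵀ *ᵥ x))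
    (hsmall : η < 1/2)
    (K MD H : Matrix (Fin n ⊕ Fin m) (Fin n ⊕ Fin m) ℝ)
    (hK : K = fromBlocks F Bᵀ B 0)
    (hMD : MD = fromBlocks F 0 0 H2)
    (hH : H = fromBlocks H1 0 0 H2) :
    wnorm H H⁻¹ (H * (MD⁻¹ * K) - (MD⁻¹ * K)ᵀ * H) ≤ 4 * C₁ * η := by
  classical
  have hH2t : H2ᵀ = H2 := herm_transpose hH2pd.1
  have hNt : Nᵀ = -N := by
    rw [hN]; ext i j
    simp [Matrix.transpose_apply, Matrix.sub_apply, Matrix.smul_apply, Matrix.neg_apply]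
    ring
  have hF : F = H1 + N := by
    rw [hH1, hN]; ext i j
    simp [Matrix.add_apply, Matrix.smul_apply, Matrix.sub_apply, Matrix.transpose_apply]
    ring
  have hFt : Fᵀ = H1 - N := by
    rw [hH1, hN]; ext i j
    simp [Matrix.add_apply, Matrix.smul_apply, Matrix.sub_apply, Matrix.transpose_apply]
    ring
  have hH2det : IsUnit H2.det := isUnit_iff_ne_zero.2 hH2pd.det_pos.ne'
  have hFdet : IsUnit F.det := by
    rw [isUnit_iff_ne_zero]
    intro h0
    obtain ⟨v, hv, hFv⟩ := Matrix.exists_mulVec_eq_zero_iff.mpr h0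
    have h2 : v ⬝ᵥ (F *ᵥ v) = v ⬝ᵥ (H1 *ᵥ v) := by
      rw [hF, add_mulVec, dotProduct_add, skew_dot hNt, add_zero]
    have h3 : (0:ℝ) < v ⬝ᵥ (H1 *ᵥ v) := by simpa using hH1pd.dotProduct_mulVec_pos hv
    rw [hFv, dotProduct_zero] at h2
    exact h3.ne h2
  have hNpt : ∀ z, vnorm H1⁻¹ (N *ᵥ z) ≤ η * vnorm H1 z :=
    pointwise_of_wnorm_le hH1pd hH1pd.inv N hNnorm
  have hBpt : ∀ z, vnorm H2⁻¹ (B *ᵥ z) ≤ C₁ * vnorm H1 z :=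
    pointwise_of_wnorm_le hH1pd hH2pd.inv B hBnorm
  have hBtpt : ∀ x : Fin m → ℝ, vnorm H1⁻¹ (Bᵀ *ᵥ x) ≤ C₁ * vnorm H2 x := by
    intro x
    have htnn : 0 ≤ vnorm H1⁻¹ (Bᵀ *ᵥ x) := vnorm_nonneg _ _
    rcases htnn.eq_or_lt with h0 | hpos
    · rw [← h0]; exact mul_nonneg hC1.le (vnorm_nonneg _ _)
    · have h1 : (Bᵀ *ᵥ x) ⬝ᵥ (H1⁻¹ *ᵥ (Bᵀ *ᵥ x)) = x ⬝ᵥ (B *ᵥ (H1⁻¹ *ᵥ (Bᵀ *ᵥ x))) := by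
        rw [mulVec_transpose, ← dotProduct_mulVec]
      have h2 : x ⬝ᵥ (B *ᵥ (H1⁻¹ *ᵥ (Bᵀ *ᵥ x))) ≤
          vnorm H2⁻¹ (B *ᵥ (H1⁻¹ *ᵥ (Bᵀ *ᵥ x))) * vnorm H2 x := by
        rw [dotProduct_comm]; exact wcs hH2pd _ x
      have h3 : vnorm H2⁻¹ (B *ᵥ (H1⁻¹ *ᵥ (Bᵀ *ᵥ x))) ≤ C₁ * vnorm H1 (H1⁻¹ *ᵥ (Bᵀ *ᵥ x)) :=
        hBpt _
      have h4 : vnorm H1 (H1⁻¹ *ᵥ (Bᵀ *ᵥ x)) = vnorm H1⁻¹ (Bᵀ *ᵥ x) :=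
        vnorm_inv_mulVec hH1pd _
      have h5 : vnorm H1⁻¹ (Bᵀ *ᵥ x) ^ 2 ≤ C₁ * vnorm H1⁻¹ (Bᵀ *ᵥ x) * vnorm H2 x := by
        calc vnorm H1⁻¹ (Bᵀ *ᵥ x) ^ 2 = (Bᵀ *ᵥ x) ⬝ᵥ (H1⁻¹ *ᵥ (Bᵀ *ᵥ x)) :=
              vnorm_sq hH1pd.inv.posSemidef _
          _ = x ⬝ᵥ (B *ᵥ (H1⁻¹ *ᵥ (Bᵀ *ᵥ x))) := h1
          _ ≤ vnorm H2⁻¹ (B *ᵥ (H1⁻¹ *ᵥ (Bᵀ *ᵥ x))) * vnorm H2 x := h2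
          _ ≤ (C₁ * vnorm H1 (H1⁻¹ *ᵥ (Bᵀ *ᵥ x))) * vnorm H2 x :=
              mul_le_mul_of_nonneg_right h3 (vnorm_nonneg _ _)
          _ = C₁ * vnorm H1⁻¹ (Bᵀ *ᵥ x) * vnorm H2 x := by rw [h4]
      nlinarith [hpos]
  have hFinvB : ∀ w, vnorm H1 (F⁻¹ *ᵥ w) ≤ vnorm H1⁻¹ w := by
    intro w
    have hFz : F *ᵥ (F⁻¹ *ᵥ w) = w := by
      rw [mulVec_mulVec, mul_nonsing_inv _ hFdet, one_mulVec]
    have hsplit : ∀ z : Fin n → ℝ, z ⬝ᵥ (F *ᵥ z) = z ⬝ᵥ (H1 *ᵥ z) := by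
      intro z
      conv_lhs => rw [hF]
      rw [add_mulVec, dotProduct_add, skew_dot hNt, add_zero]
    have h2 : (F⁻¹ *ᵥ w) ⬝ᵥ (H1 *ᵥ (F⁻¹ *ᵥ w)) = w ⬝ᵥ (F⁻¹ *ᵥ w) := by
      have h := congrArg (fun u => (F⁻¹ *ᵥ w) ⬝ᵥ u) hFz
      rw [hsplit (F⁻¹ *ᵥ w)] at h
      rw [h, dotProduct_comm]
    have key : vnorm H1 (F⁻¹ *ᵥ w) ^ 2 ≤ vnorm H1⁻¹ w * vnorm H1 (F⁻¹ *ᵥ w) := by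
      rw [vnorm_sq hH1pd.posSemidef, h2]
      exact wcs hH1pd w _
    nlinarith [vnorm_nonneg H1 (F⁻¹ *ᵥ w), vnorm_nonneg H1⁻¹ w]
  have hFtinvB : ∀ w, vnorm H1 ((F⁻¹)ᵀ *ᵥ w) ≤ vnorm H1⁻¹ w := by
    intro w
    have hFz : Fᵀ *ᵥ ((F⁻¹)ᵀ *ᵥ w) = w := by
      rw [mulVec_mulVec, ← Matrix.transpose_mul, nonsing_inv_mul _ hFdet,
        Matrix.transpose_one, one_mulVec]
    have hsplit : ∀ z : Fin n → ℝ, z ⬝ᵥ (Fᵀ *ᵥ z) = z ⬝ᵥ (H1 *ᵥ z) := by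
      intro z
      conv_lhs => rw [hFt]
      rw [sub_mulVec, dotProduct_sub, skew_dot hNt, sub_zero]
    have h2 : ((F⁻¹)ᵀ *ᵥ w) ⬝ᵥ (H1 *ᵥ ((F⁻¹)ᵀ *ᵥ w)) = w ⬝ᵥ ((F⁻¹)ᵀ *ᵥ w) := by
      have h := congrArg (fun u => ((F⁻¹)ᵀ *ᵥ w) ⬝ᵥ u) hFz
      rw [hsplit ((F⁻¹)ᵀ *ᵥ w)] at h
      rw [h, dotProduct_comm]
    have key : vnorm H1 ((F⁻¹)ᵀ *ᵥ w) ^ 2 ≤ vnorm H1⁻¹ w * vnorm H1 ((F⁻¹)ᵀ *ᵥ w) := by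
      rw [vnorm_sq hH1pd.posSemidef, h2]
      exact wcs hH1pd w _
    nlinarith [vnorm_nonneg H1 ((F⁻¹)ᵀ *ᵥ w), vnorm_nonneg H1⁻¹ w]
  -- block structure
  have hMDinv : MD⁻¹ = fromBlocks F⁻¹ 0 0 H2⁻¹ := by
    apply inv_eq_right_inv
    rw [hMD, fromBlocks_multiply]
    simp [mul_nonsing_inv _ hFdet, mul_nonsing_inv _ hH2det, fromBlocks_one]
  have hHinv : H⁻¹ = fromBlocks H1⁻¹ 0 0 H2⁻¹ := by
    apply inv_eq_right_inv
    rw [hH, fromBlocks_multiply]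
    simp [mul_nonsing_inv _ (isUnit_iff_ne_zero.2 hH1pd.det_pos.ne'),
      mul_nonsing_inv _ hH2det, fromBlocks_one]
  have hA : MD⁻¹ * K = fromBlocks 1 (F⁻¹ * Bᵀ) (H2⁻¹ * B) 0 := by
    rw [hMDinv, hK, fromBlocks_multiply]
    simp [nonsing_inv_mul _ hFdet]
  have hHA : H * (MD⁻¹ * K) = fromBlocks H1 (H1 * (F⁻¹ * Bᵀ)) B 0 := by
    rw [hA, hH, fromBlocks_multiply]
    have : H2 * (H2⁻¹ * B) = B := by
      rw [← Matrix.mul_assoc, mul_nonsing_inv _ hH2det, Matrix.one_mul]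
    simp [this]
  have hAT : (MD⁻¹ * K)ᵀ * H = fromBlocks H1 Bᵀ (B * ((F⁻¹)ᵀ * H1)) 0 := by
    rw [hA, fromBlocks_transpose, hH, fromBlocks_multiply]
    have h1 : (H2⁻¹ * B)ᵀ * H2 = Bᵀ := by
      rw [Matrix.transpose_mul, Matrix.transpose_nonsing_inv, hH2t, Matrix.mul_assoc,
        nonsing_inv_mul _ hH2det, Matrix.mul_one]
    have h2 : (F⁻¹ * Bᵀ)ᵀ * H1 = B * ((F⁻¹)ᵀ * H1) := by
      rw [Matrix.transpose_mul, Matrix.transpose_transpose, Matrix.mul_assoc]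
    simp [Matrix.transpose_mul, Matrix.transpose_nonsing_inv, hH2t, Matrix.mul_assoc,
      nonsing_inv_mul _ hH2det]
  have hG : H * (MD⁻¹ * K) - (MD⁻¹ * K)ᵀ * H =
      fromBlocks 0 (-(N * (F⁻¹ * Bᵀ))) (-(B * ((F⁻¹)ᵀ * N))) 0 := by
    rw [hHA, hAT, fromBlocks_sub'']
    have hH1F : H1 = F - N := eq_sub_of_add_eq hF.symm
    have hTR : H1 * (F⁻¹ * Bᵀ) - Bᵀ = -(N * (F⁻¹ * Bᵀ)) := by
      have hFX : F * (F⁻¹ * Bᵀ) = Bᵀ := by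
        rw [← Matrix.mul_assoc, mul_nonsing_inv _ hFdet, Matrix.one_mul]
      rw [hH1F, Matrix.sub_mul, hFX]
      abel
    have hBL : B - B * ((F⁻¹)ᵀ * H1) = -(B * ((F⁻¹)ᵀ * N)) := by
      have hH1Ft : H1 = Fᵀ + N := by rw [hFt]; abel
      have hFX : (F⁻¹)ᵀ * Fᵀ = 1 := by
        rw [← Matrix.transpose_mul, mul_nonsing_inv _ hFdet, Matrix.transpose_one]
      rw [hH1Ft, Matrix.mul_add, hFX, Matrix.mul_add, Matrix.mul_one]
      abel
    rw [sub_self, sub_self, hTR, hBL]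
  rw [hG, hHinv, hH]
  unfold wnorm
  apply Real.sSup_le _ (by positivity)
  rintro r ⟨v, hv, rfl⟩
  have hvsum : v = Sum.elim (v ∘ Sum.inl) (v ∘ Sum.inr) := by
    funext x; cases x <;> rfl
  set v1 : Fin n → ℝ := v ∘ Sum.inl with hv1def
  set v2 : Fin m → ℝ := v ∘ Sum.inr with hv2def
  have hdiag : ∀ (P : Matrix (Fin n) (Fin n) ℝ) (Q : Matrix (Fin m) (Fin m) ℝ)
      (a : Fin n → ℝ) (b : Fin m → ℝ),
      vnorm (fromBlocks P 0 0 Q) (Sum.elim a b) = Real.sqrt (a ⬝ᵥ (P *ᵥ a) + b ⬝ᵥ (Q *ᵥ b)) := by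
    intro P Q a b
    unfold vnorm
    rw [fromBlocks_mulVec]
    simp
  have hmul : (fromBlocks 0 (-(N * (F⁻¹ * Bᵀ))) (-(B * ((F⁻¹)ᵀ * N))) 0) *ᵥ v
      = Sum.elim ((-(N * (F⁻¹ * Bᵀ))) *ᵥ v2) ((-(B * ((F⁻¹)ᵀ * N))) *ᵥ v1) := by
    rw [fromBlocks_mulVec]
    simp
    rfl
  have ha' : vnorm H1⁻¹ ((-(N * (F⁻¹ * Bᵀ))) *ᵥ v2) ≤ C₁ * η * vnorm H2 v2 := by
    rw [neg_mulVec, vnorm_neg, ← mulVec_mulVec]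
    calc vnorm H1⁻¹ (N *ᵥ ((F⁻¹ * Bᵀ) *ᵥ v2)) ≤ η * vnorm H1 ((F⁻¹ * Bᵀ) *ᵥ v2) := hNpt _
      _ = η * vnorm H1 (F⁻¹ *ᵥ (Bᵀ *ᵥ v2)) := by rw [← mulVec_mulVec]
      _ ≤ η * vnorm H1⁻¹ (Bᵀ *ᵥ v2) := mul_le_mul_of_nonneg_left (hFinvB _) hη.le
      _ ≤ η * (C₁ * vnorm H2 v2) := mul_le_mul_of_nonneg_left (hBtpt _) hη.le
      _ = C₁ * η * vnorm H2 v2 := by ring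
  have hb' : vnorm H2⁻¹ ((-(B * ((F⁻¹)ᵀ * N))) *ᵥ v1) ≤ C₁ * η * vnorm H1 v1 := by
    rw [neg_mulVec, vnorm_neg, ← mulVec_mulVec]
    calc vnorm H2⁻¹ (B *ᵥ (((F⁻¹)ᵀ * N) *ᵥ v1)) ≤ C₁ * vnorm H1 (((F⁻¹)ᵀ * N) *ᵥ v1) := hBpt _
      _ = C₁ * vnorm H1 ((F⁻¹)ᵀ *ᵥ (N *ᵥ v1)) := by rw [← mulVec_mulVec]
      _ ≤ C₁ * vnorm H1⁻¹ (N *ᵥ v1) := mul_le_mul_of_nonneg_left (hFtinvB _) hC1.le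
      _ ≤ C₁ * (η * vnorm H1 v1) := mul_le_mul_of_nonneg_left (hNpt _) hC1.le
      _ = C₁ * η * vnorm H1 v1 := by ring
  have hHvpos : 0 < vnorm (fromBlocks H1 0 0 H2) v := by
    conv_rhs => rw [hvsum]
    rw [hdiag]
    apply Real.sqrt_pos.2
    have h1 : 0 ≤ v1 ⬝ᵥ (H1 *ᵥ v1) := by simpa using hH1pd.posSemidef.dotProduct_mulVec_nonneg v1
    have h2 : 0 ≤ v2 ⬝ᵥ (H2 *ᵥ v2) := by simpa using hH2pd.posSemidef.dotProduct_mulVec_nonneg v2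
    rcases em (v1 = 0) with h | h
    · have hv2 : v2 ≠ 0 := by
        intro h2'
        apply hv
        rw [hvsum, h, h2']
        funext x; cases x <;> rfl
      have : 0 < v2 ⬝ᵥ (H2 *ᵥ v2) := by simpa using hH2pd.dotProduct_mulVec_pos hv2
      linarith
    · have : 0 < v1 ⬝ᵥ (H1 *ᵥ v1) := by simpa using hH1pd.dotProduct_mulVec_pos h
      linarith
  have hnum : vnorm (fromBlocks H1⁻¹ 0 0 H2⁻¹)
      ((fromBlocks 0 (-(N * (F⁻¹ * Bᵀ))) (-(B * ((F⁻¹)ᵀ * N))) 0) *ᵥ v)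
      ≤ (C₁ * η) * vnorm (fromBlocks H1 0 0 H2) v := by
    rw [hmul, hdiag]
    conv_rhs => rw [hvsum]
    rw [hdiag]
    rw [← vnorm_sq hH1pd.inv.posSemidef, ← vnorm_sq hH2pd.inv.posSemidef,
      ← vnorm_sq hH1pd.posSemidef, ← vnorm_sq hH2pd.posSemidef]
    exact combine (vnorm_nonneg _ _) (vnorm_nonneg _ _) (by positivity) ha' hb'
  rw [div_le_iff₀ hHvpos]
  refine le_trans hnum ?_
  exact mul_le_mul_of_nonneg_right (by nlinarith) hHvpos.le
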